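/- Let k ≥ 2 and let P_k ⊆ E be the vertex set of the regular 2k-gon inscribed in the unit circle, P_k = {p_j = (cos(jπ/k), sin(jπ/k)) : 0 ≤ j < 2k}. Suppose c : Fin k → E and r : Fin k → ℝ with r i ≤ sin(π/(2k)) for all i and P_k ⊆ ⋃ i, Metric.closedBall (c i) (r i). Then each disk contains exactly two of the vertices, which are adjacent vertices of the 2k-gon, and the resulting pairing of the vertices is one of the two perfect matchings into adjacent pairs: either there is a bijection f of Fin k with P_k ∩ Metric.closedBall (c i) (r i) = {p_{2·f(i)}, p_{2·f(i)+1}} for all i, or there is a bijection f of Fin k with P_k ∩ Metric.closedBall (c i) (r i) = {p_{2·f(i)+1}, p_{(2·f(i)+2) mod 2k}} for all i. In particular, the optimal k-center problem for P_k has exactly two optimal solutions. -/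

import Mathlib

open Metric Real

noncomputable section

abbrev E : Type := EuclideanSpace ℝ (Fin 2)

/-- The `j`-th vertex of the regular `2k`-gon inscribed in the unit circle. -/
noncomputable def gonPt (k j : ℕ) : E := !₂[Real.cos (j * π / k), Real.sin (j * π / k)]

/-- The vertex set of the regular `2k`-gon inscribed in the unit circle. -/
def Pgon (k : ℕ) : Set E := {x | ∃ j < 2 * k, x = gonPt k j}

lemma dist_gonPt (k : ℕ) (hk : 1 ≤ k) (a b : ℕ) :
    dist (gonPt k a) (gonPt k b) = 2 * |Real.sin (((a:ℝ) - b) * π / (2*k))| := by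
  have hk0 : (k:ℝ) ≠ 0 := Nat.cast_ne_zero.mpr (by omega)
  set A := (a:ℝ) * π / k with hA
  set B := (b:ℝ) * π / k with hB
  set u := ((a:ℝ) - b) * π / (2*k) with hu
  have h5 : A - B = 2 * u := by rw [hA, hB, hu]; field_simp
  have key : (Real.cos A - Real.cos B)^2 + (Real.sin A - Real.sin B)^2
      = (2 * |Real.sin u|)^2 := by
    have h1 := Real.cos_sub A B
    have h2 := Real.sin_sq_add_cos_sq A
    have h3 := Real.sin_sq_add_cos_sq B
    have h4 : Real.cos (A - B) = 2 * Real.cos u ^ 2 - 1 := by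
      rw [h5]; exact Real.cos_two_mul u
    have h6 := Real.sin_sq_add_cos_sq u
    have h7 : |Real.sin u|^2 = Real.sin u ^ 2 := sq_abs _
    nlinarith [h1, h2, h3, h4, h6, h7]
  rw [EuclideanSpace.dist_eq]
  simp only [gonPt, Fin.sum_univ_two, Matrix.cons_val_zero, Matrix.cons_val_one,
    Matrix.head_cons, Real.dist_eq, sq_abs]
  rw [← hA, ← hB, key, Real.sqrt_sq (by positivity)]

lemma far (k a b : ℕ) (hk : 2 ≤ k) (ha : a < 2*k) (hlt : b < a)
    (h2 : 2 ≤ a - b) (h3 : a - b ≤ 2*k - 2) :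
    2 * Real.sin (π/(2*k)) < dist (gonPt k a) (gonPt k b) := by
  have hπ := Real.pi_pos
  have hkpos : (0:ℝ) < k := by exact_mod_cast (by omega : 0 < k)
  rw [dist_gonPt k (by omega) a b]
  set d : ℕ := a - b with hd
  have hcast : ((a:ℝ) - b) = (d:ℝ) := by
    rw [hd, Nat.cast_sub hlt.le]
  rw [hcast]
  set t := π/(2*k) with ht
  have htpos : 0 < t := by rw [ht]; positivity
  have h2kt : 2*(k:ℝ)*t = π := by rw [ht]; field_simp
  have ht4 : 4 * t ≤ π := by
    have : (4:ℝ) ≤ 2*k := by exact_mod_cast (by omega : 4 ≤ 2*k)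
    nlinarith
  have hd2 : (2:ℝ) ≤ (d:ℝ) := by exact_mod_cast h2
  have hd3 : (d:ℝ) ≤ 2*(k:ℝ) - 2 := by
    have h4 : ((d:ℕ):ℝ) ≤ ((2*k-2 : ℕ):ℝ) := Nat.cast_le.mpr h3
    rw [Nat.cast_sub (by omega : 2 ≤ 2*k)] at h4
    push_cast at h4
    linarith
  have harg : (d:ℝ) * π / (2*k) = (d:ℝ) * t := by rw [ht]; ring
  rw [harg]
  have hub : (d:ℝ)*t ≤ π - 2*t := by nlinarith
  have hlb : 2*t ≤ (d:ℝ)*t := by nlinarith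
  -- sin (2t) ≤ sin (d t)
  have hsd : Real.sin (2*t) ≤ Real.sin ((d:ℝ)*t) := by
    rcases le_or_gt ((d:ℝ)*t) (π/2) with h | h
    · exact Real.strictMonoOn_sin.monotoneOn
        ⟨by linarith, by linarith⟩ ⟨by linarith, h⟩ hlb
    · calc Real.sin (2*t) ≤ Real.sin (π - (d:ℝ)*t) :=
            Real.strictMonoOn_sin.monotoneOn
              ⟨by linarith, by linarith⟩ ⟨by linarith, by linarith⟩ (by linarith)
        _ = Real.sin ((d:ℝ)*t) := Real.sin_pi_sub _
  have hs2 : Real.sin t < Real.sin (2*t) :=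
    Real.strictMonoOn_sin ⟨by linarith, by linarith⟩ ⟨by linarith, by linarith⟩ (by linarith)
  have habs : |Real.sin ((d:ℝ)*t)| = Real.sin ((d:ℝ)*t) :=
    abs_of_nonneg (Real.sin_nonneg_of_nonneg_of_le_pi (by nlinarith) (by linarith))
  rw [habs]
  linarith

lemma close_adj (k : ℕ) (hk : 2 ≤ k) (a b : ℕ) (ha : a < 2*k) (hb : b < 2*k)
    (hd : dist (gonPt k a) (gonPt k b) ≤ 2 * Real.sin (π/(2*k))) :
    a = b ∨ a + 1 = b ∨ b + 1 = a ∨ (a = 0 ∧ b + 1 = 2*k) ∨ (b = 0 ∧ a + 1 = 2*k) := by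
  by_contra hcon
  push_neg at hcon
  obtain ⟨h1, h2, h3, h4, h5⟩ := hcon
  rcases lt_trichotomy a b with h | h | h
  · have := far k b a hk hb h (by omega) (by omega)
    rw [dist_comm] at hd
    linarith
  · exact h1 h
  · have := far k a b hk ha h (by omega) (by omega)
    linarith

set_option maxHeartbeats 2000000 in
theorem gon_optimal_cover_is_one_of_two_matchings
    (k : ℕ) (hk : 2 ≤ k) (c : Fin k → E) (r : Fin k → ℝ)
    (hr : ∀ i, r i ≤ Real.sin (π / (2 * k)))
    (hcov : Pgon k ⊆ ⋃ i, Metric.closedBall (c i) (r i)) :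
    (∃ f : Equiv.Perm (Fin k), ∀ i,
        Pgon k ∩ Metric.closedBall (c i) (r i)
          = {gonPt k (2 * ((f i : ℕ))), gonPt k (2 * ((f i : ℕ)) + 1)}) ∨
    (∃ f : Equiv.Perm (Fin k), ∀ i,
        Pgon k ∩ Metric.closedBall (c i) (r i)
          = {gonPt k (2 * ((f i : ℕ)) + 1), gonPt k ((2 * ((f i : ℕ)) + 2) % (2 * k))}) := by
  classical
  have h2k : 0 < 2*k := by omega
  -- choose a covering disk for each vertex
  have hch : ∀ j : Fin (2*k), ∃ i, gonPt k (j:ℕ) ∈ closedBall (c i) (r i) := by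
    intro j
    exact Set.mem_iUnion.mp (hcov ⟨(j:ℕ), j.isLt, rfl⟩)
  choose g hg using hch
  -- two points in the same ball are close
  have inball : ∀ (i : Fin k) (p q : E), p ∈ closedBall (c i) (r i) →
      q ∈ closedBall (c i) (r i) → dist p q ≤ 2 * Real.sin (π/(2*k)) := by
    intro i p q hp hq
    have hri := hr i
    rw [mem_closedBall] at hp hq
    have h1 : dist p q ≤ dist p (c i) + dist q (c i) := dist_triangle_right _ _ _
    linarith
  -- each fiber has exactly two elements
  have hle : ∀ i : Fin k,
      (Finset.univ.filter (fun j : Fin (2*k) => g j = i)).card ≤ 2 := by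
    intro i
    by_contra hgt
    push_neg at hgt
    obtain ⟨x, hx, y, hy, z, hz, hxy, hxz, hyz⟩ := Finset.two_lt_card.mp hgt
    simp only [Finset.mem_filter, Finset.mem_univ, true_and] at hx hy hz
    have bx : gonPt k (x:ℕ) ∈ closedBall (c i) (r i) := hx ▸ hg x
    have by' : gonPt k (y:ℕ) ∈ closedBall (c i) (r i) := hy ▸ hg y
    have bz : gonPt k (z:ℕ) ∈ closedBall (c i) (r i) := hz ▸ hg z
    have r1 := close_adj k hk x y x.isLt y.isLt (inball i _ _ bx by')
    have r2 := close_adj k hk x z x.isLt z.isLt (inball i _ _ bx bz)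
    have r3 := close_adj k hk y z y.isLt z.isLt (inball i _ _ by' bz)
    have n1 : (x:ℕ) ≠ y := fun h => hxy (Fin.ext h)
    have n2 : (x:ℕ) ≠ z := fun h => hxz (Fin.ext h)
    have n3 : (y:ℕ) ≠ z := fun h => hyz (Fin.ext h)
    have bx' := x.isLt; have byy := y.isLt; have bzz := z.isLt
    omega
  have hsum : ∑ i : Fin k,
      (Finset.univ.filter (fun j : Fin (2*k) => g j = i)).card = 2*k := by
    rw [← Finset.card_eq_sum_card_fiberwise (f := g) (t := Finset.univ)
      (fun x _ => Finset.mem_univ _)]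
    simp
  have hfib : ∀ i : Fin k,
      (Finset.univ.filter (fun j : Fin (2*k) => g j = i)).card = 2 := by
    intro i
    by_contra hne
    have hlt : (Finset.univ.filter (fun j : Fin (2*k) => g j = i)).card < 2 :=
      lt_of_le_of_ne (hle i) hne
    have hstrict : ∑ i : Fin k,
        (Finset.univ.filter (fun j : Fin (2*k) => g j = i)).card < ∑ _i : Fin k, 2 :=
      Finset.sum_lt_sum (fun i _ => hle i) ⟨i, Finset.mem_univ i, hlt⟩
    rw [hsum] at hstrict
    simp [Finset.sum_const, Finset.card_univ] at hstrict
    omega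
  -- extract ordered adjacent pairs
  have key : ∀ i : Fin k, ∃ a b : Fin (2*k), g a = i ∧ g b = i ∧
      (b:ℕ) = ((a:ℕ)+1) % (2*k) ∧ ∀ x : Fin (2*k), g x = i → x = a ∨ x = b := by
    intro i
    obtain ⟨u, v, huv, hset⟩ := Finset.card_eq_two.mp (hfib i)
    have hu : g u = i := by
      have : u ∈ Finset.univ.filter (fun j : Fin (2*k) => g j = i) := by
        rw [hset]; exact Finset.mem_insert_self u {v}
      simpa using this
    have hv : g v = i := by
      have : v ∈ Finset.univ.filter (fun j : Fin (2*k) => g j = i) := by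
        rw [hset]; exact Finset.mem_insert_of_mem (Finset.mem_singleton_self v)
      simpa using this
    have hmemuv : ∀ x, g x = i → x = u ∨ x = v := by
      intro x hx
      have : x ∈ ({u, v} : Finset (Fin (2*k))) := by
        rw [← hset]; simp [hx]
      simpa using this
    have hd := inball i _ _ (hu ▸ hg u) (hv ▸ hg v)
    have hadj := close_adj k hk u v u.isLt v.isLt hd
    have hne : (u:ℕ) ≠ (v:ℕ) := fun h => huv (Fin.ext h)
    rcases hadj with h | h | h | h | h
    · exact absurd h hne
    · exact ⟨u, v, hu, hv, by rw [Nat.mod_eq_of_lt (by omega : (u:ℕ)+1 < 2*k)]; omega,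
        hmemuv⟩
    · refine ⟨v, u, hv, hu, ?_, fun x hx => (hmemuv x hx).symm⟩
      rw [Nat.mod_eq_of_lt (by omega : (v:ℕ)+1 < 2*k)]; omega
    · refine ⟨v, u, hv, hu, ?_, fun x hx => (hmemuv x hx).symm⟩
      rw [show (v:ℕ)+1 = 2*k from h.2, Nat.mod_self]; omega
    · exact ⟨u, v, hu, hv, by rw [show (u:ℕ)+1 = 2*k from h.2, Nat.mod_self]; omega,
        hmemuv⟩
  choose L M hgL hgM hsucc hmem using key
  have hmod : ∀ i : Fin k, (M i : ℕ) = (L i : ℕ) + 1 ∨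
      ((M i : ℕ) = 0 ∧ (L i : ℕ) + 1 = 2*k) := by
    intro i
    have h := hsucc i
    have hL := (L i).isLt
    rcases Nat.lt_or_ge ((L i : ℕ)+1) (2*k) with h' | h'
    · left; rw [Nat.mod_eq_of_lt h'] at h; omega
    · right
      have he : (L i : ℕ)+1 = 2*k := by omega
      rw [he, Nat.mod_self] at h
      omega
  -- alternation
  have step : ∀ (n : ℕ) (h : n+1 < 2*k),
      (L (g ⟨n+1, h⟩) = ⟨n+1, h⟩) ↔ ¬ (L (g ⟨n, by omega⟩) = ⟨n, by omega⟩) := by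
    intro n h
    set j : Fin (2*k) := ⟨n, by omega⟩ with hj
    set j' : Fin (2*k) := ⟨n+1, h⟩ with hj'
    constructor
    · intro hp' hp
      have hM : (M (g j) : ℕ) = n+1 := by
        have hs := hsucc (g j)
        rw [hp] at hs
        rw [hs, hj]
        simp [Nat.mod_eq_of_lt h]
      have hMj' : M (g j) = j' := Fin.ext (by rw [hM, hj'])
      have hgg : g j' = g j := by rw [← hMj', hgM]
      rw [hgg, hp] at hp'
      have : n = n + 1 := congrArg Fin.val hp'
      omega
    · intro hnp
      rcases hmem (g j') j' rfl with hL' | hM'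
      · exact hL'.symm
      · exfalso
        have hMval : (M (g j') : ℕ) = n+1 := by rw [← hM']
        rcases hmod (g j') with hc | hc
        · -- L (g j') has value n
          have hLval : (L (g j') : ℕ) = n := by omega
          have hLj : L (g j') = j := Fin.ext (by rw [hLval])
          have hgg : g j = g j' := by rw [← hLj, hgL]
          rcases hmem (g j) j rfl with h1 | h1
          · exact hnp h1.symm
          · have : (j : ℕ) = (M (g j) : ℕ) := congrArg Fin.val h1
            rw [hgg, hMval] at this
            simp [hj] at this
        · omega
  have par : ∀ (n : ℕ) (h : n < 2*k),
      (L (g ⟨n, h⟩) = ⟨n, h⟩) ↔ (Even n ↔ (L (g ⟨0, h2k⟩) = ⟨0, h2k⟩)) := by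
    intro n
    induction n with
    | zero => intro h; simp
    | succ m ih =>
      intro h
      rw [step m h, ih (by omega), Nat.even_add_one]
      tauto
  have predL : ∀ i, L (g (L i)) = L i := fun i => by rw [hgL]
  -- the two vertices in each ball
  have main : ∀ i, Pgon k ∩ closedBall (c i) (r i)
      = {gonPt k (L i : ℕ), gonPt k (M i : ℕ)} := by
    intro i
    have hLb : gonPt k (L i : ℕ) ∈ closedBall (c i) (r i) := by
      have := hg (L i); rwa [hgL i] at this
    have hMb : gonPt k (M i : ℕ) ∈ closedBall (c i) (r i) := by
      have := hg (M i); rwa [hgM i] at this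
    ext x
    constructor
    · rintro ⟨⟨j, hj, rfl⟩, hball⟩
      have r1 := close_adj k hk j (L i) hj (L i).isLt (inball i _ _ hball hLb)
      have r2 := close_adj k hk j (M i) hj (M i).isLt (inball i _ _ hball hMb)
      have r3 := hmod i
      have b1 := (L i).isLt
      have b2 := (M i).isLt
      have hj' : j = (L i : ℕ) ∨ j = (M i : ℕ) := by omega
      rcases hj' with h | h <;> rw [h] <;> simp
    · intro hx
      simp only [Set.mem_insert_iff, Set.mem_singleton_iff] at hx
      rcases hx with rfl | rfl
      · exact ⟨⟨(L i : ℕ), (L i).isLt, rfl⟩, hLb⟩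
      · exact ⟨⟨(M i : ℕ), (M i).isLt, rfl⟩, hMb⟩
  set f : Fin k → Fin k := fun i => ⟨(L i : ℕ)/2, by have := (L i).isLt; omega⟩ with hf
  by_cases h0 : L (g ⟨0, h2k⟩) = ⟨0, h2k⟩
  · -- even case
    have hEv : ∀ i, Even (L i : ℕ) := fun i =>
      ((par (L i : ℕ) (L i).isLt).mp (predL i)).mpr h0
    have hf2 : ∀ i, 2 * ((f i : ℕ)) = (L i : ℕ) := by
      intro i
      obtain ⟨m, hm⟩ := hEv i
      simp only [hf]
      omega
    have hinj : Function.Injective f := by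
      intro i i' hii
      have hv : (f i : ℕ) = (f i' : ℕ) := congrArg Fin.val hii
      have : (L i : ℕ) = (L i' : ℕ) := by rw [← hf2 i, ← hf2 i', hv]
      have hLL : L i = L i' := Fin.ext this
      rw [← hgL i, ← hgL i', hLL]
    refine Or.inl ⟨Equiv.ofBijective f (Finite.injective_iff_bijective.mp hinj),
      fun i => ?_⟩
    rw [main i]
    show ({gonPt k (L i : ℕ), gonPt k (M i : ℕ)} : Set E)
      = {gonPt k (2 * ((f i : ℕ))), gonPt k (2 * ((f i : ℕ)) + 1)}
    have e2 : 2 * ((f i : ℕ)) + 1 = (M i : ℕ) := by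
      rcases hmod i with h | h
      · rw [hf2 i]; omega
      · obtain ⟨m, hm⟩ := hEv i
        omega
    rw [e2, hf2 i]
  · -- odd case
    have hOd : ∀ i, ¬ Even (L i : ℕ) := fun i he =>
      h0 (((par (L i : ℕ) (L i).isLt).mp (predL i)).mp he)
    have hf2 : ∀ i, 2 * ((f i : ℕ)) + 1 = (L i : ℕ) := by
      intro i
      have ho := Nat.odd_iff.mp (Nat.not_even_iff_odd.mp (hOd i))
      simp only [hf]
      omega
    have hinj : Function.Injective f := by
      intro i i' hii
      have hv : (f i : ℕ) = (f i' : ℕ) := congrArg Fin.val hii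
      have : (L i : ℕ) = (L i' : ℕ) := by rw [← hf2 i, ← hf2 i', hv]
      have hLL : L i = L i' := Fin.ext this
      rw [← hgL i, ← hgL i', hLL]
    refine Or.inr ⟨Equiv.ofBijective f (Finite.injective_iff_bijective.mp hinj),
      fun i => ?_⟩
    rw [main i]
    show ({gonPt k (L i : ℕ), gonPt k (M i : ℕ)} : Set E)
      = {gonPt k (2 * ((f i : ℕ)) + 1), gonPt k ((2 * ((f i : ℕ)) + 2) % (2 * k))}
    have e2 : (2 * ((f i : ℕ)) + 2) % (2*k) = (M i : ℕ) := by
      rw [hsucc i]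
      congr 1
      rw [← hf2 i]
    rw [hf2 i, e2]

end
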